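/- arXiv:1702.05423 — 3 statements merged into one kernel-verified Lean document; each statement's English description precedes it below -/
import Mathlib

section
/- Let t ≥ 2 be an integer, θ ∈ (0,1], k₀ ∈ ℝ, and positive reals ρ₁, …, ρ_t satisfying: θ(k+k₀+1) ≥ 1 for all 2 ≤ k ≤ t; (θ(k+k₀+1) − 1)/ρ_{k−1} ≥ (θ(k+k₀+2) − 1)/ρ_k for all 2 ≤ k ≤ t−1; and (θ(t+k₀+1) − 1)/ρ_{t−1} ≥ (t+k₀+1)/ρ_t. Then for any vectors λ¹, …, λ^{t+1}, λ ∈ ℝ^p: −((t+k₀+1)/ρ_t) Δ(λ^{t+1}, λ^t, λ) − ∑_{k=2}^t ((θ(k+k₀+1) − 1)/ρ_{k−1}) Δ(λ^k, λ^{k−1}, λ) ≤ ((θ(k₀+3) − 1)/(2ρ₁)) ‖λ¹ − λ‖². -/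
/-- `Δ(v⁺, v°, v) = (1/2)(‖v⁺ − v‖² − ‖v° − v‖² + ‖v⁺ − v°‖²)`. -/
noncomputable def Delta {E : Type*} [NormedAddCommGroup E]
    (vp vo v : E) : ℝ :=
  1 / 2 * (‖vp - v‖ ^ 2 - ‖vo - v‖ ^ 2 + ‖vp - vo‖ ^ 2)

lemma delta_ge {E : Type*} [NormedAddCommGroup E] (vp vo v : E) :
    (‖vp - v‖ ^ 2 - ‖vo - v‖ ^ 2) / 2 ≤ Delta vp vo v := by
  have := sq_nonneg ‖vp - vo‖
  unfold Delta; nlinarith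

lemma tele (c a : ℕ → ℝ) (ha : ∀ k, 0 ≤ a k) :
    ∀ n, 2 ≤ n → (∀ k, 2 ≤ k → k ≤ n → 0 ≤ c k) →
      (∀ k, 2 ≤ k → k + 1 ≤ n → c (k + 1) ≤ c k) →
      ∑ k ∈ Finset.Icc 2 n, c k * (a (k - 1) - a k) ≤ c 2 * a 1 - c n * a n := by
  intro n hn
  induction n, hn using Nat.le_induction with
  | base =>
    intro _ _
    simp [Finset.Icc_self]
    ring_nf
    norm_num
  | succ n hn ih =>
    intro hc hmono
    rw [Finset.sum_Icc_succ_top (by omega)]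
    have ihb := ih (fun k h1 h2 => hc k h1 (by omega))
      (fun k h1 h2 => hmono k h1 (by omega))
    have h1 : c (n + 1) ≤ c n := hmono n hn (le_refl _)
    have h2 : c (n + 1) * a n ≤ c n * a n :=
      mul_le_mul_of_nonneg_right h1 (ha n)
    have h3 : 0 ≤ a n := ha n
    simp only [Nat.add_sub_cancel]
    nlinarith

/-- Proposition B.2 of the paper. -/
theorem stmt_10
    {p : ℕ}
    (t : ℕ) (ht : 2 ≤ t)
    (θ : ℝ) (hθ0 : 0 < θ) (hθ1 : θ ≤ 1)
    (k₀ : ℝ)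
    (ρ : ℕ → ℝ) (hρpos : ∀ k : ℕ, 1 ≤ k → k ≤ t → 0 < ρ k)
    (hθk : ∀ k : ℕ, 2 ≤ k → k ≤ t → 1 ≤ θ * ((k : ℝ) + k₀ + 1))
    (hρmono : ∀ k : ℕ, 2 ≤ k → k ≤ t - 1 →
      (θ * ((k : ℝ) + k₀ + 2) - 1) / ρ k ≤ (θ * ((k : ℝ) + k₀ + 1) - 1) / ρ (k - 1))
    (hρt : ((t : ℝ) + k₀ + 1) / ρ t ≤ (θ * ((t : ℝ) + k₀ + 1) - 1) / ρ (t - 1))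
    (lamseq : ℕ → EuclideanSpace ℝ (Fin p)) (lam : EuclideanSpace ℝ (Fin p)) :
    -(((t : ℝ) + k₀ + 1) / ρ t) * Delta (lamseq (t + 1)) (lamseq t) lam
      - (∑ k ∈ Finset.Icc 2 t, (θ * ((k : ℝ) + k₀ + 1) - 1) / ρ (k - 1) *
            Delta (lamseq k) (lamseq (k - 1)) lam)
    ≤ (θ * (k₀ + 3) - 1) / (2 * ρ 1) * ‖lamseq 1 - lam‖ ^ 2 := by
  set c : ℕ → ℝ := fun k =>
    if k = t + 1 then ((t : ℝ) + k₀ + 1) / ρ t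
    else (θ * ((k : ℝ) + k₀ + 1) - 1) / ρ (k - 1) with hc_def
  set a : ℕ → ℝ := fun k => ‖lamseq k - lam‖ ^ 2 with ha_def
  have ha : ∀ k, 0 ≤ a k := fun k => sq_nonneg _
  -- nonnegativity of c on [2, t+1]
  have hcpos : ∀ k : ℕ, 2 ≤ k → k ≤ t + 1 → 0 ≤ c k := by
    intro k h2 hk
    by_cases hkt : k = t + 1
    · simp only [hc_def, hkt, if_pos rfl]
      have h1 : 1 ≤ θ * ((t : ℝ) + k₀ + 1) := hθk t ht (le_refl _)
      have : (0:ℝ) < (t : ℝ) + k₀ + 1 := by nlinarith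
      exact div_nonneg this.le (hρpos t (by omega) (le_refl _)).le
    · have hkt' : k ≤ t := by omega
      simp only [hc_def, if_neg hkt]
      have h1 := hθk k h2 hkt'
      have h2' := hρpos (k - 1) (by omega) (by omega)
      exact div_nonneg (by linarith) h2'.le
  -- monotonicity
  have hcmono : ∀ k : ℕ, 2 ≤ k → k + 1 ≤ t + 1 → c (k + 1) ≤ c k := by
    intro k h2 hk
    have hkt : k ≤ t := by omega
    by_cases hkeq : k = t
    · subst hkeq
      simp only [hc_def, if_pos rfl, if_neg (by omega : k ≠ k + 1)]
      exact hρt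
    · have h1 : k + 1 ≤ t := by omega
      simp only [hc_def, if_neg (by omega : k + 1 ≠ t + 1), if_neg (by omega : k ≠ t + 1)]
      have := hρmono k h2 (by omega)
      have hcast : ((k + 1 : ℕ) : ℝ) = (k : ℝ) + 1 := by push_cast; ring
      rw [hcast, Nat.add_sub_cancel]
      calc (θ * ((k : ℝ) + 1 + k₀ + 1) - 1) / ρ k
          = (θ * ((k : ℝ) + k₀ + 2) - 1) / ρ k := by ring_nf
        _ ≤ (θ * ((k : ℝ) + k₀ + 1) - 1) / ρ (k - 1) := this
  -- pointwise bound: -c k * Delta ≤ c k * (a (k-1) - a k) / 2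
  have hpt : ∀ k : ℕ, 2 ≤ k → k ≤ t + 1 →
      -(c k * Delta (lamseq k) (lamseq (k - 1)) lam) ≤ c k * (a (k - 1) - a k) / 2 := by
    intro k h2 hk
    have hD := delta_ge (lamseq k) (lamseq (k - 1)) lam
    have hc := hcpos k h2 hk
    have : c k * ((a k - a (k - 1)) / 2) ≤ c k * Delta (lamseq k) (lamseq (k - 1)) lam :=
      mul_le_mul_of_nonneg_left hD hc
    simp only [ha_def] at *
    linarith
  -- rewrite LHS as a sum over Icc 2 (t+1)
  have hLHS : -(((t : ℝ) + k₀ + 1) / ρ t) * Delta (lamseq (t + 1)) (lamseq t) lam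
      - (∑ k ∈ Finset.Icc 2 t, (θ * ((k : ℝ) + k₀ + 1) - 1) / ρ (k - 1) *
            Delta (lamseq k) (lamseq (k - 1)) lam)
      = ∑ k ∈ Finset.Icc 2 (t + 1), -(c k * Delta (lamseq k) (lamseq (k - 1)) lam) := by
    rw [Finset.sum_Icc_succ_top (by omega)]
    have hsum : ∑ k ∈ Finset.Icc 2 t, -(c k * Delta (lamseq k) (lamseq (k - 1)) lam)
        = -∑ k ∈ Finset.Icc 2 t, (θ * ((k : ℝ) + k₀ + 1) - 1) / ρ (k - 1) *
            Delta (lamseq k) (lamseq (k - 1)) lam := by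
      rw [← Finset.sum_neg_distrib]
      apply Finset.sum_congr rfl
      intro k hk
      simp only [Finset.mem_Icc] at hk
      simp only [hc_def, if_neg (by omega : k ≠ t + 1)]
    rw [hsum]
    simp only [hc_def, if_pos rfl, Nat.add_sub_cancel]
    ring
  rw [hLHS]
  have step1 : ∑ k ∈ Finset.Icc 2 (t + 1), -(c k * Delta (lamseq k) (lamseq (k - 1)) lam)
      ≤ ∑ k ∈ Finset.Icc 2 (t + 1), c k * (a (k - 1) - a k) / 2 := by
    apply Finset.sum_le_sum
    intro k hk
    simp only [Finset.mem_Icc] at hk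
    exact hpt k hk.1 hk.2
  have step2 := tele c a ha (t + 1) (by omega) hcpos hcmono
  have step2' : ∑ k ∈ Finset.Icc 2 (t + 1), c k * (a (k - 1) - a k) / 2
      ≤ (c 2 * a 1 - c (t + 1) * a (t + 1)) / 2 := by
    rw [← Finset.sum_div]
    linarith
  have hfin : (c 2 * a 1 - c (t + 1) * a (t + 1)) / 2
      ≤ (θ * (k₀ + 3) - 1) / (2 * ρ 1) * ‖lamseq 1 - lam‖ ^ 2 := by
    have h1 : 0 ≤ c (t + 1) * a (t + 1) :=
      mul_nonneg (hcpos (t + 1) (by omega) (le_refl _)) (ha _)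
    have hc2 : c 2 = (θ * (k₀ + 3) - 1) / ρ 1 := by
      simp only [hc_def, if_neg (by omega : 2 ≠ t + 1)]
      norm_num
      ring_nf
    rw [hc2]
    have : (θ * (k₀ + 3) - 1) / ρ 1 * a 1 / 2
        = (θ * (k₀ + 3) - 1) / (2 * ρ 1) * ‖lamseq 1 - lam‖ ^ 2 := by
      simp only [ha_def]
      field_simp
    linarith [this]
  linarith
end

section
/- Let B ∈ ℝ^{p×q}, h : ℝ^q → ℝ differentiable with ∇h L_h-Lipschitz, Q := η_y I − β BᵀB with η_y, β > 0, ρ > 0, θ ∈ (0,1], δ > 0. Let y*, λ* satisfy ∇h(y*) = Bᵀλ*. Fix x^{k+1} (so that r^{k+1/2} := A x^{k+1} + B y^k − b is fixed), y^k, λ^k, and let ỹ^{k+1} satisfy ∇h(ỹ^{k+1}) − Bᵀλ^k + β Bᵀ r^{k+1/2} + η_y(ỹ^{k+1} − y^k) = 0. Consider the two outcomes y^{k+1} ∈ {ỹ^{k+1}, y^k} with respective weights θ and 1−θ, with r^{k+1} := r^{k+1/2} + B(y^{k+1} − y^k) and λ^{k+1} := λ^k − ρ r^{k+1}; write E[q(y^{k+1})]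 := θ q(ỹ^{k+1}) + (1−θ) q(y^k). Then E[‖Bᵀ(λ^{k+1} − λ*)‖²] − (1−θ)(1+δ)‖Bᵀ(λ^k − λ*)‖² ≤ 4 E[ L_h²‖y^{k+1} − y*‖² + ‖Q(y^{k+1} − y^k)‖² ] + 2(β − ρ)² E[‖Bᵀ r^{k+1}‖²] + 2ρ²(1−θ)(1 + 1/δ) E[ ‖Bᵀ r^{k+1}‖² + ‖BᵀB(y^{k+1} − y^k)‖² ]. -/
section
variable {E : Type*} [NormedAddCommGroup E]

lemma aux_add3 (a b c : E) : ‖a + b + c‖ ^ 2 ≤ 4 * ‖a‖ ^ 2 + 4 * ‖b‖ ^ 2 + 2 * ‖c‖ ^ 2 := by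
  have h1 := norm_add_le (a + b) c
  have h2 := norm_add_le a b
  nlinarith [norm_nonneg a, norm_nonneg b, norm_nonneg c, norm_nonneg (a + b),
    norm_nonneg (a + b + c), sq_nonneg (‖a‖ - ‖b‖), sq_nonneg (‖a + b‖ - ‖c‖)]

lemma aux_young {δ : ℝ} (hδ : 0 < δ) (a c : E) :
    ‖a + c‖ ^ 2 ≤ (1 + δ) * ‖a‖ ^ 2 + (1 + 1 / δ) * ‖c‖ ^ 2 := by
  have h1 := norm_add_le a c
  have key : 2 * ‖a‖ * ‖c‖ ≤ δ * ‖a‖ ^ 2 + ‖c‖ ^ 2 / δ := by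
    rw [← mul_le_mul_iff_right₀ hδ]
    field_simp
    nlinarith [sq_nonneg (δ * ‖a‖ - ‖c‖)]
  have h2 : ‖a + c‖ ^ 2 ≤ (‖a‖ + ‖c‖) ^ 2 := by
    apply pow_le_pow_left₀ (norm_nonneg _) h1
  ring_nf at h2 key ⊢
  linarith

lemma aux_sub2 (x y : E) : ‖x - y‖ ^ 2 ≤ 2 * ‖x‖ ^ 2 + 2 * ‖y‖ ^ 2 := by
  have h1 := norm_sub_le x y
  nlinarith [norm_nonneg x, norm_nonneg y, norm_nonneg (x - y), sq_nonneg (‖x‖ - ‖y‖)]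

end

set_option maxHeartbeats 2000000 in
/-- Lemma C.2 of the paper (bounding the dual term by the primal `y`-term). -/
theorem stmt_15
    {p q N : ℕ}
    (A : EuclideanSpace ℝ (Fin N) →L[ℝ] EuclideanSpace ℝ (Fin p))
    (b : EuclideanSpace ℝ (Fin p))
    (B : EuclideanSpace ℝ (Fin q) →L[ℝ] EuclideanSpace ℝ (Fin p))
    (h : EuclideanSpace ℝ (Fin q) → ℝ)
    (Gh : EuclideanSpace ℝ (Fin q) → EuclideanSpace ℝ (Fin q))
    (hhgrad : ∀ z, HasGradientAt h (Gh z) z)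
    (Lh : ℝ) (hLh : 0 ≤ Lh)
    (hhlip : ∀ u v, ‖Gh u - Gh v‖ ≤ Lh * ‖u - v‖)
    (ηy β ρ : ℝ) (hηy : 0 < ηy) (hβ : 0 < β) (hρ : 0 < ρ)
    (θ : ℝ) (hθ0 : 0 < θ) (hθ1 : θ ≤ 1)
    (δ : ℝ) (hδ : 0 < δ)
    (Qop : EuclideanSpace ℝ (Fin q) →L[ℝ] EuclideanSpace ℝ (Fin q))
    (hQop : Qop = ηy • (1 : EuclideanSpace ℝ (Fin q) →L[ℝ] EuclideanSpace ℝ (Fin q))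
      - β • ((ContinuousLinearMap.adjoint B).comp B))
    (ystar : EuclideanSpace ℝ (Fin q)) (lamstar : EuclideanSpace ℝ (Fin p))
    (hstar : Gh ystar = ContinuousLinearMap.adjoint B lamstar)
    (xkp : EuclideanSpace ℝ (Fin N))
    (yk : EuclideanSpace ℝ (Fin q)) (lamk : EuclideanSpace ℝ (Fin p))
    (rhalf : EuclideanSpace ℝ (Fin p)) (hrhalf : rhalf = A xkp + B yk - b)
    (ytilde : EuclideanSpace ℝ (Fin q))
    (hyopt : Gh ytilde - ContinuousLinearMap.adjoint B lamk
      + β • ContinuousLinearMap.adjoint B rhalf + ηy • (ytilde - yk) = 0)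
    (rnew : EuclideanSpace ℝ (Fin q) → EuclideanSpace ℝ (Fin p))
    (hrnew : ∀ y', rnew y' = rhalf + B (y' - yk))
    (lamnew : EuclideanSpace ℝ (Fin q) → EuclideanSpace ℝ (Fin p))
    (hlamnew : ∀ y', lamnew y' = lamk - ρ • rnew y')
    (EX : (EuclideanSpace ℝ (Fin q) → ℝ) → ℝ)
    (hEX : ∀ Q : EuclideanSpace ℝ (Fin q) → ℝ,
      EX Q = θ * Q ytilde + (1 - θ) * Q yk) :
    EX (fun y' => ‖ContinuousLinearMap.adjoint B (lamnew y' - lamstar)‖ ^ 2)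
        - (1 - θ) * (1 + δ) * ‖ContinuousLinearMap.adjoint B (lamk - lamstar)‖ ^ 2
      ≤ 4 * EX (fun y' => Lh ^ 2 * ‖y' - ystar‖ ^ 2 + ‖Qop (y' - yk)‖ ^ 2)
        + 2 * (β - ρ) ^ 2 * EX (fun y' => ‖ContinuousLinearMap.adjoint B (rnew y')‖ ^ 2)
        + 2 * ρ ^ 2 * (1 - θ) * (1 + 1 / δ) *
            EX (fun y' => ‖ContinuousLinearMap.adjoint B (rnew y')‖ ^ 2
              + ‖ContinuousLinearMap.adjoint B (B (y' - yk))‖ ^ 2) := by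
  set T := ContinuousLinearMap.adjoint B with hTdef
  -- optimality condition rearranged
  have hGh : Gh ytilde = T lamk - β • T rhalf - ηy • (ytilde - yk) := by
    apply eq_of_sub_eq_zero
    rw [← hyopt]; module
  have hrt : rnew ytilde = rhalf + B (ytilde - yk) := hrnew _
  have hrk : rnew yk = rhalf := by rw [hrnew]; simp
  -- key identity for the ytilde outcome
  have key : T (lamnew ytilde - lamstar)
      = (Gh ytilde - Gh ystar) + Qop (ytilde - yk) + (β - ρ) • T (rnew ytilde) := by
    rw [hlamnew, hGh, hstar, hQop, hrt]
    simp only [map_sub, map_add, map_smul, ContinuousLinearMap.sub_apply,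
      ContinuousLinearMap.smul_apply, ContinuousLinearMap.one_apply,
      ContinuousLinearMap.comp_apply]
    module
  -- bound for the ytilde outcome
  have hlip2 : ‖Gh ytilde - Gh ystar‖ ^ 2 ≤ Lh ^ 2 * ‖ytilde - ystar‖ ^ 2 := by
    have := hhlip ytilde ystar
    nlinarith [norm_nonneg (Gh ytilde - Gh ystar), norm_nonneg (ytilde - ystar)]
  have h1 : ‖T (lamnew ytilde - lamstar)‖ ^ 2
      ≤ 4 * (Lh ^ 2 * ‖ytilde - ystar‖ ^ 2 + ‖Qop (ytilde - yk)‖ ^ 2)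
        + 2 * (β - ρ) ^ 2 * ‖T (rnew ytilde)‖ ^ 2 := by
    rw [key]
    have h3 := aux_add3 (Gh ytilde - Gh ystar) (Qop (ytilde - yk)) ((β - ρ) • T (rnew ytilde))
    have hs : ‖(β - ρ) • T (rnew ytilde)‖ ^ 2 = (β - ρ) ^ 2 * ‖T (rnew ytilde)‖ ^ 2 := by
      rw [norm_smul, Real.norm_eq_abs, mul_pow, sq_abs]
    rw [hs] at h3
    linarith
  -- identity and bound for the yk outcome
  have key2 : T (lamnew yk - lamstar) = T (lamk - lamstar) + (-ρ) • T (rnew yk) := by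
    rw [hlamnew]
    simp only [map_sub, map_smul]
    module
  have h2 : ‖T (lamnew yk - lamstar)‖ ^ 2
      ≤ (1 + δ) * ‖T (lamk - lamstar)‖ ^ 2 + (1 + 1 / δ) * (ρ ^ 2 * ‖T (rnew yk)‖ ^ 2) := by
    rw [key2]
    have h3 := aux_young hδ (T (lamk - lamstar)) ((-ρ) • T (rnew yk))
    have hs : ‖(-ρ) • T (rnew yk)‖ ^ 2 = ρ ^ 2 * ‖T (rnew yk)‖ ^ 2 := by
      rw [norm_smul, Real.norm_eq_abs, mul_pow, sq_abs]; ring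
    rw [hs] at h3
    exact h3
  -- rhalf bound
  have h3 : ‖T (rnew yk)‖ ^ 2 ≤ 2 * ‖T (rnew ytilde)‖ ^ 2 + 2 * ‖T (B (ytilde - yk))‖ ^ 2 := by
    have e : T (rnew yk) = T (rnew ytilde) - T (B (ytilde - yk)) := by
      rw [hrk, hrt, map_add]; abel
    rw [e]
    exact aux_sub2 _ _
  -- combine
  simp only [hEX, sub_self, map_zero, norm_zero]
  have ht1 : 0 ≤ 1 - θ := by linarith
  have hp1 := mul_le_mul_of_nonneg_left h1 hθ0.le
  have hp2 := mul_le_mul_of_nonneg_left h2 ht1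
  have c3 : 0 ≤ θ * (1 - θ) * (1 + 1 / δ) * ρ ^ 2 := by positivity
  have hp3 := mul_le_mul_of_nonneg_left h3 c3
  nlinarith [hp1, hp2, hp3, sq_nonneg (β - ρ), sq_nonneg ρ,
    mul_nonneg ht1 (mul_nonneg (sq_nonneg Lh) (sq_nonneg ‖yk - ystar‖)),
    mul_nonneg (mul_nonneg (sq_nonneg (β - ρ)) ht1) (sq_nonneg ‖T (rnew yk)‖),
    mul_nonneg (mul_nonneg (mul_nonneg (mul_nonneg ht1 ht1) (by positivity : (0:ℝ) ≤ 1 + 1/δ)) (sq_nonneg ρ)) (sq_nonneg ‖T (rnew yk)‖)]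
end

section
/- Let θ ∈ (0,1], and let δ, κ ≥ 0 satisfy the 2×2 matrix inequality 2·[[1 − (1−θ)(1+δ), (1−θ)(1+δ)], [(1−θ)(1+δ), κ − (1−θ)(1+δ)]] ⪰ [[θ, 1−θ], [1−θ, 1/θ − (1−θ)]]. Let B ∈ ℝ^{p×q} and σ ≥ 0 be such that BBᵀ − σI is positive semidefinite. Then for all λ⁺, λ, λ* ∈ ℝ^p: (σ/2)( ‖λ⁺ − λ*‖² − (1−θ)‖λ − λ*‖² + (1/θ)‖λ⁺ − λ‖² ) ≤ ‖Bᵀ(λ⁺ − λ*)‖² − (1−θ)(1+δ)‖Bᵀ(λ − λ*)‖² + κ‖Bᵀ(λ⁺ − λ)‖². -/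
open RealInnerProductSpace

lemma aux_quad (A Bc C x y z : ℝ) (hx : 0 ≤ x) (hz : 0 ≤ z) (hy : y^2 ≤ x*z)
    (h : ∀ s t : ℝ, 0 ≤ A*s^2 + 2*Bc*s*t + C*t^2) :
    0 ≤ A*x + 2*Bc*y + C*z := by
  have hA : 0 ≤ A := by have := h 1 0; linarith
  have hC : 0 ≤ C := by have := h 0 1; linarith
  have hd : discrim A (2*Bc) C ≤ 0 := by
    apply discrim_le_zero
    intro s
    nlinarith [h s 1]
  rw [discrim] at hd
  nlinarith [mul_nonneg hx hz, mul_nonneg hA hC, mul_nonneg (mul_nonneg hA hC) (mul_nonneg hx hz), sq_nonneg (A*x - C*z), sq_nonneg (A*x + C*z), sq_nonneg (Bc*y), sq_nonneg (A*x+2*Bc*y+C*z), mul_nonneg hA hx, mul_nonneg hC hz]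

lemma aux_expand {E : Type*} [NormedAddCommGroup E] [InnerProductSpace ℝ E]
    (u v : E) (t : ℝ) :
    ‖u + t • v‖^2 = ‖u‖^2 + 2*t*⟪u, v⟫ + t^2*‖v‖^2 := by
  rw [norm_add_sq_real, real_inner_smul_right, norm_smul]
  simp [mul_pow, sq_abs]
  ring

lemma aux_cs {E F : Type*} [NormedAddCommGroup E] [InnerProductSpace ℝ E]
    [NormedAddCommGroup F] [InnerProductSpace ℝ F]
    (T : E →L[ℝ] F) (σ : ℝ)
    (hnorm : ∀ w : E, σ * ‖w‖^2 ≤ ‖T w‖^2) (a b : E) :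
    (⟪T a, T b⟫ - σ * ⟪a, b⟫)^2 ≤ (‖T a‖^2 - σ * ‖a‖^2) * (‖T b‖^2 - σ * ‖b‖^2) := by
  have key : ∀ t : ℝ, 0 ≤ (‖T b‖^2 - σ*‖b‖^2) * (t*t) + (2*(⟪T a, T b⟫ - σ*⟪a, b⟫))*t
      + (‖T a‖^2 - σ*‖a‖^2) := by
    intro t
    have h1 := hnorm (a + t • b)
    rw [aux_expand a b t, map_add, map_smul, aux_expand (T a) (T b) t] at h1
    nlinarith [h1]
  have := discrim_le_zero key
  rw [discrim] at this
  nlinarith [this]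

set_option maxHeartbeats 4000000 in

/-- Lemma C.3 of the paper. -/
theorem stmt_16
    {p q : ℕ}
    (θ : ℝ) (hθ0 : 0 < θ) (hθ1 : θ ≤ 1)
    (δ κ : ℝ) (hδ : 0 ≤ δ) (hκ : 0 ≤ κ)
    (hmat : ((2 : ℝ) • !![1 - (1 - θ) * (1 + δ), (1 - θ) * (1 + δ);
                (1 - θ) * (1 + δ), κ - (1 - θ) * (1 + δ)]
          - !![θ, 1 - θ; 1 - θ, 1 / θ - (1 - θ)]).PosSemidef)
    (B : EuclideanSpace ℝ (Fin q) →L[ℝ] EuclideanSpace ℝ (Fin p))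
    (σ : ℝ) (hσ0 : 0 ≤ σ)
    (hσ : ∀ v : EuclideanSpace ℝ (Fin p),
      σ * ‖v‖ ^ 2 ≤ inner ℝ v ((B.comp (ContinuousLinearMap.adjoint B)) v))
    (lamp lam lamstar : EuclideanSpace ℝ (Fin p)) :
    σ / 2 * (‖lamp - lamstar‖ ^ 2 - (1 - θ) * ‖lam - lamstar‖ ^ 2
        + 1 / θ * ‖lamp - lam‖ ^ 2)
      ≤ ‖ContinuousLinearMap.adjoint B (lamp - lamstar)‖ ^ 2
        - (1 - θ) * (1 + δ) * ‖ContinuousLinearMap.adjoint B (lam - lamstar)‖ ^ 2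
        + κ * ‖ContinuousLinearMap.adjoint B (lamp - lam)‖ ^ 2 := by
  obtain ⟨a, ha⟩ : ∃ x, x = lamp - lamstar := ⟨_, rfl⟩
  obtain ⟨b, hb⟩ : ∃ x, x = lamp - lam := ⟨_, rfl⟩
  have hab : lam - lamstar = a - b := by rw [ha, hb]; abel
  rw [hab, ← ha, ← hb]
  have hnorm : ∀ w : EuclideanSpace ℝ (Fin p),
      σ * ‖w‖^2 ≤ ‖ContinuousLinearMap.adjoint B w‖^2 := by
    intro w
    have h1 := hσ w
    have h2 : (inner ℝ w ((B.comp (ContinuousLinearMap.adjoint B)) w) : ℝ)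
        = ‖ContinuousLinearMap.adjoint B w‖^2 := by
      rw [ContinuousLinearMap.comp_apply, ← ContinuousLinearMap.adjoint_inner_left,
        real_inner_self_eq_norm_sq]
    linarith [h2.le, h2.ge]
  have hCSQ := aux_cs (ContinuousLinearMap.adjoint B) σ hnorm a b
  have hCSI : (⟪a, b⟫)^2 ≤ ‖a‖^2 * ‖b‖^2 := by
    have := real_inner_mul_inner_self_le a b
    rw [real_inner_self_eq_norm_sq, real_inner_self_eq_norm_sq] at this
    nlinarith [this]
  have hquad : ∀ s t : ℝ, 0 ≤ (2*(1 - (1-θ)*(1+δ)) - θ)*s^2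
      + 2*(2*(1-θ)*(1+δ) - (1-θ))*s*t
      + (2*(κ - (1-θ)*(1+δ)) - (1/θ - (1-θ)))*t^2 := by
    intro s t
    have h := hmat.dotProduct_mulVec_nonneg ![s, t]
    simp [Matrix.mulVec, dotProduct, Fin.sum_univ_two, Matrix.sub_apply,
      Matrix.smul_apply, Matrix.cons_val_zero, Matrix.cons_val_one, Matrix.head_cons] at h
    linear_combination h
  have hinv : θ * (1/θ) = 1 := by field_simp
  have hP : ∀ s t : ℝ, 0 ≤ θ*s^2 + 2*(1-θ)*s*t + (1/θ - (1-θ))*t^2 := by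
    intro s t
    nlinarith [sq_nonneg (θ*s + (1-θ)*t), sq_nonneg t, mul_pos hθ0 hθ0, hinv,
      mul_nonneg (sq_nonneg t) hθ0.le]
  have hNquad : ∀ s t : ℝ, 0 ≤ (2*(1 - (1-θ)*(1+δ)))*s^2
      + 2*(2*(1-θ)*(1+δ))*s*t + (2*(κ - (1-θ)*(1+δ)))*t^2 := by
    intro s t
    nlinarith [hquad s t, hP s t]
  have hX0 : 0 ≤ ‖ContinuousLinearMap.adjoint B a‖^2 - σ * ‖a‖^2 := by
    linarith [hnorm a]
  have hZ0 : 0 ≤ ‖ContinuousLinearMap.adjoint B b‖^2 - σ * ‖b‖^2 := by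
    linarith [hnorm b]
  rw [map_sub, norm_sub_sq_real, norm_sub_sq_real]
  set nBa := ‖ContinuousLinearMap.adjoint B a‖^2 with hnBa
  set nBb := ‖ContinuousLinearMap.adjoint B b‖^2 with hnBb
  set iB := (⟪ContinuousLinearMap.adjoint B a, ContinuousLinearMap.adjoint B b⟫ : ℝ) with hiB
  set na := ‖a‖^2 with hna
  set nb := ‖b‖^2 with hnb
  set iab := (⟪a, b⟫ : ℝ) with hiab
  clear_value nBa nBb iB na nb iab
  have hna0 : 0 ≤ na := hna ▸ sq_nonneg _
  have hnb0 : 0 ≤ nb := hnb ▸ sq_nonneg _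
  have h1 := aux_quad (2*(1 - (1-θ)*(1+δ))) (2*(1-θ)*(1+δ)) (2*(κ - (1-θ)*(1+δ)))
    (nBa - σ * na) (iB - σ * iab) (nBb - σ * nb) hX0 hZ0 hCSQ hNquad
  have h2 := aux_quad (2*(1 - (1-θ)*(1+δ)) - θ) (2*(1-θ)*(1+δ) - (1-θ))
    (2*(κ - (1-θ)*(1+δ)) - (1/θ - (1-θ))) na iab nb hna0 hnb0 hCSI hquad
  have h2' := mul_nonneg hσ0 h2
  linarith [h1, h2']
end
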